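/- arXiv:1805.05641 — 3 statements merged into one kernel-verified Lean document; each statement's English description precedes it below -/
import Mathlib

section
/- Let 1 ≤ k < n, κ_1 < … < κ_n real, c_1, …, c_n real, A a totally nonnegative real k×n matrix of rank k, and let w_1(x), …, w_k(x) be the Darboux coefficients. For v ∈ ℝ^n set h_v(x) = Σ_{j=1}^n v_j e^{κ_j x + c_j} and Ψ_v(x) = h_v^{(k)}(x) − Σ_{s=1}^k w_s(x) h_v^{(k−s)}(x). Then for every x ∈ ℝ, τ(x)·Ψ_v(x) = Σ_J Δ_J(Â_v) · Π_{j_1<j_2, j_1,j_2∈J} (κ_{j_2} − κ_{j_1}) · e^{Σ_{j∈J} (κ_j x + c_j)}, where the sum is over all (k+1)-element subsets J of {1,…,n} and Â_v is the (k+1)×n matrix obtained from A by appending v as last row. In particular, τ·Ψ_v is a finite linear combination of real exponentials in x. -/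
open scoped BigOperators

/-- The `m × m` maximal minor of a real `m × n` matrix `A` on the set of columns `I`
(defined to be `0` when `I` does not have exactly `m` elements). -/
noncomputable def maxMinor {m n : ℕ} (A : Matrix (Fin m) (Fin n) ℝ)
    (I : Finset (Fin n)) : ℝ :=
  if h : I.card = m then
    (A.submatrix id fun j => ((I.orderIsoOfFin h) j : Fin n)).det
  else 0

/-- The Vandermonde-type product `Π_{j₁ < j₂, j₁,j₂ ∈ J} (κ j₂ - κ j₁)`. -/
noncomputable def vandProd {n : ℕ} (κ : Fin n → ℝ) (J : Finset (Fin n)) : ℝ :=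
  ∏ p ∈ (J ×ˢ J).filter fun p => p.1 < p.2, (κ p.2 - κ p.1)

namespace SolitonAux

open Matrix

lemma iter_deriv_expsum {n : ℕ} (κ c : Fin n → ℝ) (l : ℕ) :
    ∀ (a : Fin n → ℝ) (y : ℝ),
      iteratedDeriv l (fun t => ∑ j, a j * Real.exp (κ j * t + c j)) y
        = ∑ j, a j * κ j ^ l * Real.exp (κ j * y + c j) := by
  induction l with
  | zero => intro a y; simp
  | succ l ih =>
    intro a y
    have hd : ∀ t : ℝ, HasDerivAt (fun t => ∑ j, a j * Real.exp (κ j * t + c j))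
        (∑ j, a j * κ j * Real.exp (κ j * t + c j)) t := by
      intro t
      apply HasDerivAt.fun_sum
      intro j _
      have h1 : HasDerivAt (fun t : ℝ => κ j * t + c j) (κ j) t := by
        simpa using ((hasDerivAt_id t).const_mul (κ j)).add_const (c j)
      have h2 := h1.exp
      have h3 := h2.const_mul (a j)
      have he : a j * κ j * Real.exp (κ j * t + c j)
          = a j * (Real.exp (κ j * t + c j) * κ j) := by ring
      rw [he]
      exact h3
    have hder : deriv (fun t => ∑ j, a j * Real.exp (κ j * t + c j))
        = fun t => ∑ j, (a j * κ j) * Real.exp (κ j * t + c j) := by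
      funext t
      rw [(hd t).deriv]
    rw [iteratedDeriv_succ', hder, ih]
    exact Finset.sum_congr rfl fun j _ => by ring

section Emb
variable {m n : ℕ} (J : Finset (Fin n)) (hJ : J.card = m)

/-- Increasing enumeration of an `m`-element finset of `Fin n`. -/
noncomputable def emb : Fin m → Fin n := fun r => ((J.orderIsoOfFin hJ) r : Fin n)

lemma emb_strictMono : StrictMono (emb J hJ) := fun a b hab => by
  simpa [emb] using (J.orderIsoOfFin hJ).lt_iff_lt.mpr hab

lemma emb_injective : Function.Injective (emb J hJ) := (emb_strictMono J hJ).injective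

lemma emb_mem (r : Fin m) : emb J hJ r ∈ J := ((J.orderIsoOfFin hJ) r).2

lemma emb_image : Finset.image (emb J hJ) Finset.univ = J := by
  apply Finset.eq_of_subset_of_card_le
  · intro j hj
    obtain ⟨r, -, rfl⟩ := Finset.mem_image.mp hj
    exact emb_mem J hJ r
  · rw [Finset.card_image_of_injective _ (emb_injective J hJ)]
    simp [hJ]

lemma emb_surj {j : Fin n} (hj : j ∈ J) : ∃ r, emb J hJ r = j :=
  ⟨(J.orderIsoOfFin hJ).symm ⟨j, hj⟩, by simp [emb]⟩

lemma maxMinor_eq (B : Matrix (Fin m) (Fin n) ℝ) :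
    maxMinor B J = (B.submatrix id (emb J hJ)).det := by
  rw [maxMinor, dif_pos hJ]; rfl

end Emb

lemma step1 {m n : ℕ} (B : Matrix (Fin m) (Fin n) ℝ) (N : Matrix (Fin n) (Fin m) ℝ) :
    det (B * N) = ∑ φ : Fin m → Fin n,
      (∏ i, B i (φ i)) * det (N.submatrix φ id) := by
  have h1 : det (B * N)
      = (detRowAlternating : (Fin m → ℝ) [⋀^Fin m]→ₗ[ℝ] ℝ)
          (fun i => ∑ j : Fin n, B i j • N j) := by
    congr 1
    ext i l
    simp [Matrix.mul_apply]
  rw [h1]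
  have h2 := MultilinearMap.map_sum
    (detRowAlternating : (Fin m → ℝ) [⋀^Fin m]→ₗ[ℝ] ℝ).toMultilinearMap
    (g := fun (i : Fin m) (j : Fin n) => B i j • N j)
  simp only [AlternatingMap.coe_multilinearMap] at h2
  rw [h2]
  refine Finset.sum_congr rfl fun φ _ => ?_
  have h3 := MultilinearMap.map_smul_univ
    (detRowAlternating : (Fin m → ℝ) [⋀^Fin m]→ₗ[ℝ] ℝ).toMultilinearMap
    (fun i => B i (φ i)) (fun i => N (φ i))
  simp only [AlternatingMap.coe_multilinearMap] at h3
  rw [h3]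
  rfl

/-- Cauchy–Binet formula for real rectangular matrices with `Fin` index types. -/
lemma cauchy_binet {m n : ℕ} (B : Matrix (Fin m) (Fin n) ℝ) (N : Matrix (Fin n) (Fin m) ℝ) :
    det (B * N) = ∑ J ∈ Finset.powersetCard m (Finset.univ : Finset (Fin n)),
      maxMinor B J * maxMinor Nᵀ J := by
  classical
  rw [step1]
  set F : (Fin m → Fin n) → ℝ :=
    fun φ => (∏ i, B i (φ i)) * det (N.submatrix φ id) with hF
  have hzero : ∀ φ : Fin m → Fin n, ¬ Function.Injective φ → F φ = 0 := by
    intro φ hφ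
    simp only [Function.Injective, not_forall] at hφ
    obtain ⟨a, b, hab, hne⟩ := hφ
    have : det (N.submatrix φ id) = 0 :=
      det_zero_of_row_eq hne (funext fun l => by simp [hab])
    simp [hF, this]
  have hfilter : ∑ φ : Fin m → Fin n, F φ
      = ∑ φ ∈ Finset.univ.filter (fun φ => Function.Injective φ), F φ := by
    refine (Finset.sum_filter_of_ne ?_).symm
    intro φ _ hφ
    by_contra hni
    exact hφ (hzero φ hni)
  rw [hfilter]
  have hmaps : ∀ φ ∈ Finset.univ.filter (fun φ : Fin m → Fin n => Function.Injective φ),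
      Finset.image φ Finset.univ ∈ Finset.powersetCard m (Finset.univ : Finset (Fin n)) := by
    intro φ hφ
    rw [Finset.mem_filter] at hφ
    rw [Finset.mem_powersetCard]
    exact ⟨Finset.subset_univ _, by
      rw [Finset.card_image_of_injective _ hφ.2]; simp⟩
  rw [← Finset.sum_fiberwise_of_maps_to hmaps F]
  refine Finset.sum_congr rfl fun J hJmem => ?_
  have hJ : J.card = m := (Finset.mem_powersetCard.mp hJmem).2
  have hinner : ∑ φ ∈ (Finset.univ.filter (fun φ : Fin m → Fin n => Function.Injective φ)).filter
        (fun φ => Finset.image φ Finset.univ = J), F φ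
      = ∑ σ : Equiv.Perm (Fin m), F (fun i => emb J hJ (σ i)) := by
    refine (Finset.sum_bij (fun (σ : Equiv.Perm (Fin m)) _ => fun i => emb J hJ (σ i))
      ?_ ?_ ?_ ?_).symm
    · intro σ _
      simp only [Finset.mem_filter, Finset.mem_univ, true_and]
      constructor
      · exact (emb_injective J hJ).comp σ.injective
      · rw [show Finset.image (fun i => emb J hJ (σ i)) Finset.univ
            = Finset.image (emb J hJ) (Finset.image σ Finset.univ) by
            rw [Finset.image_image]; rfl]
        rw [Finset.image_univ_equiv]
        exact emb_image J hJ
    · intro σ₁ _ σ₂ _ heq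
      ext i
      exact Fin.val_eq_of_eq (emb_injective J hJ (congrFun heq i))
    · intro φ hφ
      rw [Finset.mem_filter, Finset.mem_filter] at hφ
      obtain ⟨⟨-, hinj⟩, himg⟩ := hφ
      have hψ : ∀ i, φ i ∈ J := by
        intro i
        rw [← himg]
        exact Finset.mem_image_of_mem φ (Finset.mem_univ i)
      set ψ : Fin m → Fin m :=
        fun i => (J.orderIsoOfFin hJ).symm ⟨φ i, hψ i⟩ with hψdef
      have hψinj : Function.Injective ψ := by
        intro a b hab
        apply hinj
        have := (J.orderIsoOfFin hJ).symm.injective hab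
        exact congrArg Subtype.val this
      have hψbij := Finite.injective_iff_bijective.mp hψinj
      refine ⟨Equiv.ofBijective ψ hψbij, Finset.mem_univ _, ?_⟩
      funext i
      simp only [Equiv.ofBijective_apply, hψdef, emb]
      simp
    · intro σ _
      rfl
  rw [hinner]
  have hperm : ∀ σ : Equiv.Perm (Fin m),
      F (fun i => emb J hJ (σ i))
      = (Equiv.Perm.sign σ : ℤ) * (∏ i, B i (emb J hJ (σ i)))
          * det (N.submatrix (emb J hJ) id) := by
    intro σ
    have : (N.submatrix (fun i => emb J hJ (σ i)) id)
        = (N.submatrix (emb J hJ) id).submatrix σ id := by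
      ext i l; simp
    rw [hF]
    simp only [this, det_permute]
    ring
  calc ∑ σ : Equiv.Perm (Fin m), F (fun i => emb J hJ (σ i))
      = (∑ σ : Equiv.Perm (Fin m), (Equiv.Perm.sign σ : ℤ)
          * ∏ i, B i (emb J hJ (σ i))) * det (N.submatrix (emb J hJ) id) := by
        rw [Finset.sum_mul]
        refine Finset.sum_congr rfl fun σ _ => ?_
        rw [hperm σ]
    _ = det ((B.submatrix id (emb J hJ)).transpose) * det (N.submatrix (emb J hJ) id) := by
        have hsum : ∑ σ : Equiv.Perm (Fin m), ((Equiv.Perm.sign σ : ℤ) : ℝ)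
            * ∏ i, B i (emb J hJ (σ i))
            = det ((B.submatrix id (emb J hJ)).transpose) := by
          rw [det_apply']
          refine Finset.sum_congr rfl fun σ _ => ?_
          simp [Matrix.submatrix_apply]
        rw [← hsum]
    _ = maxMinor B J * maxMinor Nᵀ J := by
        rw [maxMinor_eq J hJ, maxMinor_eq J hJ, det_transpose,
          ← Matrix.transpose_submatrix, det_transpose]

lemma maxMinor_vand {n m : ℕ} (κ c : Fin n → ℝ) (x : ℝ) (J : Finset (Fin n))
    (hJ : J.card = m) :
    maxMinor (Matrix.of fun (j : Fin n) (l : Fin m) =>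
        κ j ^ (l : ℕ) * Real.exp (κ j * x + c j))ᵀ J
      = vandProd κ J * Real.exp (∑ j ∈ J, (κ j * x + c j)) := by
  classical
  rw [maxMinor_eq J hJ]
  have h1 : ((Matrix.of fun (j : Fin n) (l : Fin m) =>
        κ j ^ (l : ℕ) * Real.exp (κ j * x + c j))ᵀ.submatrix id (emb J hJ))
      = Matrix.of (fun (l r : Fin m) =>
          Real.exp (κ (emb J hJ r) * x + c (emb J hJ r))
            * (Matrix.vandermonde (fun r => κ (emb J hJ r)))ᵀ l r) := by
    ext l r
    simp [Matrix.vandermonde, mul_comm]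
  rw [h1]
  rw [show (Matrix.of (fun (l r : Fin m) =>
      Real.exp (κ (emb J hJ r) * x + c (emb J hJ r))
        * (Matrix.vandermonde (fun r => κ (emb J hJ r)))ᵀ l r))
    = Matrix.of (fun (l r : Fin m) =>
      (fun r => Real.exp (κ (emb J hJ r) * x + c (emb J hJ r))) r
        * (Matrix.vandermonde (fun r => κ (emb J hJ r)))ᵀ l r) from rfl]
  rw [Matrix.det_mul_row, Matrix.det_transpose, Matrix.det_vandermonde]
  have hexp : ∏ r : Fin m, Real.exp (κ (emb J hJ r) * x + c (emb J hJ r))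
      = Real.exp (∑ j ∈ J, (κ j * x + c j)) := by
    rw [Real.exp_sum]
    refine Finset.prod_bij (fun r _ => emb J hJ r) (fun r _ => emb_mem J hJ r)
      (fun a _ b _ hab => emb_injective J hJ hab)
      (fun j hj => by obtain ⟨r, hr⟩ := emb_surj J hJ hj; exact ⟨r, Finset.mem_univ r, hr⟩)
      (fun r _ => rfl)
  have hvand : (∏ i : Fin m, ∏ j ∈ Finset.Ioi i,
        (κ (emb J hJ j) - κ (emb J hJ i))) = vandProd κ J := by
    rw [vandProd, Finset.prod_sigma']
    refine Finset.prod_bij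
      (fun (p : Σ _ : Fin m, Fin m) _ => (emb J hJ p.1, emb J hJ p.2)) ?_ ?_ ?_ ?_
    · rintro ⟨i, j⟩ hp
      simp only [Finset.mem_sigma, Finset.mem_univ, true_and, Finset.mem_Ioi] at hp
      simp only [Finset.mem_filter, Finset.mem_product]
      exact ⟨⟨emb_mem J hJ i, emb_mem J hJ j⟩, emb_strictMono J hJ hp⟩
    · rintro ⟨i₁, j₁⟩ _ ⟨i₂, j₂⟩ _ heq
      simp only [Prod.mk.injEq] at heq
      obtain ⟨h1, h2⟩ := heq
      have := emb_injective J hJ h1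
      have := emb_injective J hJ h2
      subst this; subst ‹i₁ = i₂›
      rfl
    · rintro ⟨j₁, j₂⟩ hp
      simp only [Finset.mem_filter, Finset.mem_product] at hp
      obtain ⟨⟨hj₁, hj₂⟩, hlt⟩ := hp
      obtain ⟨r₁, hr₁⟩ := emb_surj J hJ hj₁
      obtain ⟨r₂, hr₂⟩ := emb_surj J hJ hj₂
      refine ⟨⟨r₁, r₂⟩, ?_, by simp [hr₁, hr₂]⟩
      simp only [Finset.mem_sigma, Finset.mem_univ, true_and, Finset.mem_Ioi]
      rw [← (emb_strictMono J hJ).lt_iff_lt, hr₁, hr₂]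
      exact hlt
    · rintro ⟨i, j⟩ _
      rfl
  rw [hexp, hvand, mul_comm]

end SolitonAux

open SolitonAux Matrix in
/-- for TNN soliton data with Darboux coefficients `w`, the dressed
wave function `Ψ_v` of any vector `v ∈ ℝⁿ` satisfies
`τ(x)·Ψ_v(x) = Σ_J Δ_J(Â_v) · Π_{j₁<j₂∈J}(κ_{j₂}-κ_{j₁}) · e^{Σ_{j∈J}(κ_j x + c_j)}`,
the sum running over all `(k+1)`-element subsets `J` of the columns, where `Â_v` is
`A` with the row `v` appended. -/
theorem tau_mul_dressed_eq_sum_minors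
    (k n : ℕ) (hk : 1 ≤ k) (hkn : k < n)
    (κ c : Fin n → ℝ) (hκ : StrictMono κ)
    (A : Matrix (Fin k) (Fin n) ℝ) (hrank : A.rank = k)
    (hTNN : ∀ I : Finset (Fin n), I.card = k → 0 ≤ maxMinor A I)
    (f : Fin k → ℝ → ℝ)
    (hf : ∀ i x, f i x = ∑ j, A i j * Real.exp (κ j * x + c j))
    (τ : ℝ → ℝ)
    (hτ : ∀ x, τ x =
      Matrix.det (Matrix.of fun i l : Fin k => iteratedDeriv (l : ℕ) (f i) x))
    (w : Fin k → ℝ → ℝ)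
    (hw : ∀ x i, iteratedDeriv k (f i) x =
      ∑ s : Fin k, w s x * iteratedDeriv (k - 1 - (s : ℕ)) (f i) x)
    (v : Fin n → ℝ) (h Ψ : ℝ → ℝ)
    (hh : ∀ x, h x = ∑ j, v j * Real.exp (κ j * x + c j))
    (hΨ : ∀ x, Ψ x = iteratedDeriv k h x -
      ∑ s : Fin k, w s x * iteratedDeriv (k - 1 - (s : ℕ)) h x)
    (Ahat : Matrix (Fin (k + 1)) (Fin n) ℝ)
    (hAhat : Ahat = Matrix.of (Fin.snoc (fun i : Fin k => A i) v))
    (x : ℝ) :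
    τ x * Ψ x =
      ∑ J ∈ Finset.powersetCard (k + 1) (Finset.univ : Finset (Fin n)),
        maxMinor Ahat J * vandProd κ J * Real.exp (∑ j ∈ J, (κ j * x + c j)) := by
  classical
  set sN : Matrix (Fin n) (Fin (k + 1)) ℝ :=
    Matrix.of (fun (j : Fin n) (l : Fin (k + 1)) =>
      κ j ^ (l : ℕ) * Real.exp (κ j * x + c j)) with hsN
  -- entries of Ahat * sN
  have hiterf : ∀ (i : Fin k) (l : ℕ), iteratedDeriv l (f i) x
      = ∑ j, A i j * κ j ^ l * Real.exp (κ j * x + c j) := by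
    intro i l
    have hfi : f i = fun t => ∑ j, A i j * Real.exp (κ j * t + c j) :=
      funext fun t => hf i t
    rw [hfi, iter_deriv_expsum]
  have hiterh : ∀ l : ℕ, iteratedDeriv l h x
      = ∑ j, v j * κ j ^ l * Real.exp (κ j * x + c j) := by
    intro l
    have hh' : h = fun t => ∑ j, v j * Real.exp (κ j * t + c j) :=
      funext fun t => hh t
    rw [hh', iter_deriv_expsum]
  have hMcast : ∀ (i' : Fin k) (l : Fin (k + 1)),
      (Ahat * sN) (Fin.castSucc i') l = iteratedDeriv (l : ℕ) (f i') x := by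
    intro i' l
    rw [hiterf, Matrix.mul_apply]
    refine Finset.sum_congr rfl fun j _ => ?_
    rw [hAhat]
    simp [hsN, Fin.snoc_castSucc, mul_assoc]
  have hMlast : ∀ (l : Fin (k + 1)),
      (Ahat * sN) (Fin.last k) l = iteratedDeriv (l : ℕ) h x := by
    intro l
    rw [hiterh, Matrix.mul_apply]
    refine Finset.sum_congr rfl fun j _ => ?_
    rw [hAhat]
    simp [hsN, Fin.snoc_last, mul_assoc]
  -- Part A: det (Ahat * sN) = τ x * Ψ x
  have hdetA : det (Ahat * sN) = τ x * Ψ x := by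
    set M : Matrix (Fin (k + 1)) (Fin (k + 1)) ℝ := Ahat * sN with hM
    set Mt : Matrix (Fin (k + 1)) (Fin (k + 1)) ℝ := Mᵀ with hMt
    set d : Fin k → Fin (k + 1) := fun s => ⟨k - 1 - (s : ℕ), by omega⟩ with hd
    have hdinj : Function.Injective d := by
      intro a b hab
      have ha := a.isLt
      have hb := b.isLt
      have : k - 1 - (a : ℕ) = k - 1 - (b : ℕ) := congrArg Fin.val hab
      ext
      omega
    set S : Finset (Fin (k + 1)) := Finset.image d Finset.univ with hS
    set cc : Fin (k + 1) → ℝ :=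
      fun p => -(w ⟨k - 1 - (p : ℕ), by omega⟩ x) with hcc
    have hlast_notin : Fin.last k ∉ S := by
      rw [hS]
      simp only [Finset.mem_image, Finset.mem_univ, true_and, not_exists]
      intro s hs
      have := congrArg Fin.val hs
      simp only [hd, Fin.val_last] at this
      omega
    have key := Matrix.det_updateRow_sum_aux Mt S hlast_notin cc 1
    -- identify the new last row
    have hrow : ((1 : ℝ) • Mt (Fin.last k) + ∑ p ∈ S, cc p • Mt p)
        = fun i => if i = Fin.last k then Ψ x else 0 := by
      funext i
      have hsum : (∑ p ∈ S, cc p • Mt p) i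
          = ∑ s : Fin k, -(w s x * Mt (d s) i) := by
        rw [hS, Finset.sum_image (fun a _ b _ hab => hdinj hab)]
        simp only [Finset.sum_apply, Pi.smul_apply, smul_eq_mul]
        refine Finset.sum_congr rfl fun s _ => ?_
        have harg : (⟨k - 1 - ((d s : Fin (k + 1)) : ℕ), by omega⟩ : Fin k) = s := by
          apply Fin.ext
          show k - 1 - ((d s : Fin (k + 1)) : ℕ) = (s : ℕ)
          simp only [hd]
          have := s.isLt
          omega
        have hcs : cc (d s) = -(w s x) := by
          rw [hcc]
          exact congrArg (fun t : Fin k => -(w t x)) harg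
        rw [hcs]
        ring
      have hval : ((1 : ℝ) • Mt (Fin.last k) + ∑ p ∈ S, cc p • Mt p) i
          = M i (Fin.last k) - ∑ s : Fin k, w s x * M i (d s) := by
        simp only [Pi.add_apply, Pi.smul_apply, smul_eq_mul, one_mul]
        rw [hsum]
        simp only [hMt, Matrix.transpose_apply]
        rw [Finset.sum_neg_distrib]
        ring
      rw [hval]
      refine Fin.lastCases ?_ ?_ i
      · -- i = last : row of h
        simp only [if_pos rfl]
        have h1 : M (Fin.last k) (Fin.last k) = iteratedDeriv k h x := by
          have := hMlast (Fin.last k)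
          simpa using this
        have h2 : ∀ s : Fin k, M (Fin.last k) (d s)
            = iteratedDeriv (k - 1 - (s : ℕ)) h x := by
          intro s
          have := hMlast (d s)
          simpa [hd] using this
        rw [h1, hΨ x]
        congr 1
        exact Finset.sum_congr rfl fun s _ => by rw [h2]
      · -- i = castSucc i' : row of f i'
        intro i'
        have hne : Fin.castSucc i' ≠ Fin.last k := (Fin.castSucc_lt_last i').ne
        simp only [if_neg hne]
        have h1 : M (Fin.castSucc i') (Fin.last k) = iteratedDeriv k (f i') x := by
          have := hMcast i' (Fin.last k)
          simpa using this
        have h2 : ∀ s : Fin k, M (Fin.castSucc i') (d s)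
            = iteratedDeriv (k - 1 - (s : ℕ)) (f i') x := by
          intro s
          have := hMcast i' (d s)
          simpa [hd] using this
        rw [h1, hw x i']
        rw [sub_eq_zero]
        exact Finset.sum_congr rfl fun s _ => by rw [h2]
    rw [hrow] at key
    simp only [one_smul] at key
    -- expand updated determinant along the last row
    set U : Matrix (Fin (k + 1)) (Fin (k + 1)) ℝ :=
      Mt.updateRow (Fin.last k) (fun i => if i = Fin.last k then Ψ x else 0) with hU
    have hUlast : ∀ j : Fin (k + 1), U (Fin.last k) j
        = if j = Fin.last k then Ψ x else 0 := by
      intro j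
      rw [hU, Matrix.updateRow_self]
    have hexpand : det U = Ψ x * τ x := by
      rw [det_succ_row U (Fin.last k)]
      rw [Finset.sum_eq_single (Fin.last k)]
      · rw [hUlast, if_pos rfl]
        have hsub : (U.submatrix (Fin.last k).succAbove (Fin.last k).succAbove)
            = Matrix.of (fun (l' i' : Fin k) => iteratedDeriv (l' : ℕ) (f i') x) := by
          ext l' i'
          rw [Matrix.submatrix_apply, Fin.succAbove_last]
          rw [hU, Matrix.updateRow_ne (Fin.castSucc_lt_last l').ne]
          rw [hMt]
          rw [Matrix.transpose_apply]
          rw [hMcast]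
          simp
        rw [hsub]
        have hτ' : det (Matrix.of fun (l' i' : Fin k) =>
            iteratedDeriv (l' : ℕ) (f i') x) = τ x := by
          rw [hτ x, ← Matrix.det_transpose]
          congr 1
        rw [hτ']
        have hsign : ((-1 : ℝ)) ^ ((Fin.last k : ℕ) + (Fin.last k : ℕ)) = 1 :=
          Even.neg_one_pow ⟨k, by simp⟩
        rw [hsign]
        ring
      · intro j _ hj
        rw [hUlast, if_neg hj]
        ring
      · intro hmem
        exact absurd (Finset.mem_univ _) hmem
    have hdetMt : det Mt = Ψ x * τ x := by
      rw [← hexpand, ← key]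
    have hMMt : det M = det Mt := by
      rw [hMt]
      exact (Matrix.det_transpose M).symm
    rw [hMMt, hdetMt]
    ring
  -- combine with Cauchy–Binet and the Vandermonde evaluation
  rw [← hdetA, cauchy_binet]
  refine Finset.sum_congr rfl fun J hJmem => ?_
  have hJ : J.card = k + 1 := (Finset.mem_powersetCard.mp hJmem).2
  rw [hsN, maxMinor_vand κ c x J hJ]
  ring
end

section
/- Let A be a real k×n matrix in reduced row echelon form with pivot columns i_1 < … < i_k (so A_{m, i_m} = 1, A_{m', i_m} = 0 for m' ≠ m, and A_{m,j} = 0 for j < i_m). Fix r ∈ {1,…,k} and assume row r of A is the standard unit vector e_{i_r} (A_{r,j} = 0 for all j ≠ i_r). Define the (k−1)×(n−1) matrix A' by deleting row r and column i_r from A and multiplying by −1 every remaining entry A_{m,j} with m < r and j > i_r. Then for every (k−1)-element subset J' of {1,…,n}∖{i_r}, Δ_{J'}(A') = Δ_{J'∪{i_r}}(A) (columns of A' being identified with the columns of A other than i_r). Consequently, if A is totally nonnegative of rank k, then A' is totally nonnegative of rank k−1. -/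
open scoped BigOperators

/-- let `A` be a `(k+1)×(n+1)` matrix in reduced row echelon form with
pivot columns `piv 0 < … < piv k`, and suppose row `r` of `A` is the standard unit
vector `e_{piv r}`.  Let `A'` be obtained by deleting row `r` and column `piv r`
(rows of `A'` indexed via `r.succAbove`, columns via `(piv r).succAbove`) and
changing the sign of every remaining entry lying strictly above row `r` and strictly
to the right of column `piv r`.  Then every maximal minor of `A'` on a column set
`J'` equals the maximal minor of `A` on `J' ∪ {piv r}` (columns identified via
`(piv r).succAbove`); consequently, if `A` is totally nonnegative of rank `k+1`,
then `A'` is totally nonnegative of rank `k`. -/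
theorem rref_delete_pivot_row_minors
    (k n : ℕ)
    (A : Matrix (Fin (k + 1)) (Fin (n + 1)) ℝ)
    (piv : Fin (k + 1) → Fin (n + 1)) (hpiv : StrictMono piv)
    (hpivot1 : ∀ m, A m (piv m) = 1)
    (hpivot0 : ∀ m m', m' ≠ m → A m' (piv m) = 0)
    (hlt : ∀ m j, j < piv m → A m j = 0)
    (r : Fin (k + 1))
    (hrow : ∀ j, j ≠ piv r → A r j = 0)
    (A' : Matrix (Fin k) (Fin n) ℝ)
    (hA' : ∀ m j, A' m j =
      (if r.succAbove m < r ∧ piv r < (piv r).succAbove j then (-1 : ℝ) else 1) *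
        A (r.succAbove m) ((piv r).succAbove j)) :
    (∀ J' : Finset (Fin n), J'.card = k →
        maxMinor A' J' =
          maxMinor A (insert (piv r) (J'.image ((piv r).succAbove)))) ∧
    ((A.rank = k + 1 ∧
        ∀ I : Finset (Fin (n + 1)), I.card = k + 1 → 0 ≤ maxMinor A I) →
      (A'.rank = k ∧
        ∀ J : Finset (Fin n), J.card = k → 0 ≤ maxMinor A' J)) := by
  have hsuccne : ∀ (N : ℕ) (a : Fin (N+1)) (i : Fin N), a.succAbove i ≠ a :=
    fun N a i => Fin.succAbove_ne a i
  -- main minor identity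
  have key : ∀ J' : Finset (Fin n), J'.card = k →
      maxMinor A' J' = maxMinor A (insert (piv r) (J'.image ((piv r).succAbove))) := by
    intro J' hJ'
    set p : Fin (n+1) := piv r with hp
    have hinj : Function.Injective p.succAbove := Fin.succAbove_right_injective
    have hpnotmem : p ∉ J'.image p.succAbove := by
      intro hmem
      obtain ⟨x, -, hx⟩ := Finset.mem_image.1 hmem
      exact hsuccne n p x hx
    have hs : (J'.image p.succAbove).card = k := by
      rw [Finset.card_image_of_injective _ hinj, hJ']
    have hI : (insert p (J'.image p.succAbove)).card = k + 1 := by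
      rw [Finset.card_insert_of_notMem hpnotmem, hs]
    set I : Finset (Fin (n+1)) := insert p (J'.image p.succAbove) with hIdef
    have hpI : p ∈ I := Finset.mem_insert_self _ _
    set fI : Fin (k+1) → Fin (n+1) := fun j => I.orderEmbOfFin hI j with hfI
    set g : Fin k → Fin n := fun j => J'.orderEmbOfFin hJ' j with hg
    set q : Fin (k+1) := (I.orderIsoOfFin hI).symm ⟨p, hpI⟩ with hq
    have hfq : fI q = p := by
      have : (I.orderIsoOfFin hI) q = ⟨p, hpI⟩ := (I.orderIsoOfFin hI).apply_symm_apply _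
      have := congrArg Subtype.val this
      rwa [Finset.coe_orderIsoOfFin_apply] at this
    have hfImono : StrictMono fI := (I.orderEmbOfFin hI).strictMono
    -- the column identification
    have hcol : ∀ j : Fin k, fI (q.succAbove j) = p.succAbove (g j) := by
      have h1 : (fun j : Fin k => fI (q.succAbove j)) = (J'.image p.succAbove).orderEmbOfFin hs := by
        apply Finset.orderEmbOfFin_unique hs
        · intro j
          have hmem : fI (q.succAbove j) ∈ I := Finset.orderEmbOfFin_mem I hI _
          have hne : fI (q.succAbove j) ≠ p := by
            intro h
            exact hsuccne k q j ((I.orderEmbOfFin hI).injective (h.trans hfq.symm))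
          rw [hIdef] at hmem
          rcases Finset.mem_insert.1 hmem with h | h
          · exact absurd h hne
          · exact h
        · exact hfImono.comp (Fin.strictMono_succAbove q)
      have h2 : (fun j : Fin k => p.succAbove (g j)) = (J'.image p.succAbove).orderEmbOfFin hs := by
        apply Finset.orderEmbOfFin_unique hs
        · intro j
          exact Finset.mem_image_of_mem _ (Finset.orderEmbOfFin_mem J' hJ' j)
        · exact (Fin.strictMono_succAbove p).comp (J'.orderEmbOfFin hJ').strictMono
      intro j
      rw [show fI (q.succAbove j) = (fun j : Fin k => fI (q.succAbove j)) j from rfl, h1, ← h2]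
    -- unfold the two minors
    have hL : maxMinor A' J' = (A'.submatrix id g).det := by
      rw [maxMinor, dif_pos hJ']
      rfl
    have hR : maxMinor A I = (A.submatrix id fI).det := by
      rw [maxMinor, dif_pos hI]
      rfl
    set B : Matrix (Fin (k+1)) (Fin (k+1)) ℝ := A.submatrix id fI with hB
    set sr : Fin (k+1) → ℝ := fun m => if r < m then -1 else 1 with hsr
    set sc : Fin (k+1) → ℝ := fun j => if q < j then -1 else 1 with hsc
    set B2 : Matrix (Fin (k+1)) (Fin (k+1)) ℝ :=
      Matrix.diagonal sr * B * Matrix.diagonal sc with hB2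
    have hB2app : ∀ m j, B2 m j = sr m * A m (fI j) * sc j := by
      intro m j
      rw [hB2, Matrix.mul_apply]
      simp [Matrix.mul_apply, Matrix.diagonal, Finset.sum_ite_eq, Finset.sum_ite_eq',
        mul_comm, hB]
    -- product of signs
    have hcardlt : ∀ a : Fin (k+1), (Finset.univ.filter fun m : Fin (k+1) => a < m).card = k - a := by
      intro a
      have h1 : (Finset.univ.filter fun m : Fin (k+1) => a < m) = Finset.Ioi a := by
        ext m; simp
      rw [h1, Fin.card_Ioi]
      omega
    have hprod : ∀ a : Fin (k+1), (∏ m : Fin (k+1), (if a < m then (-1:ℝ) else 1)) = (-1)^(k - (a:ℕ)) := by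
      intro a
      rw [Finset.prod_ite, Finset.prod_const, Finset.prod_const, one_pow, mul_one, hcardlt]
    have hdetB2 : B2.det = (-1)^(k - (r:ℕ)) * (-1)^(k - (q:ℕ)) * B.det := by
      rw [hB2, Matrix.det_mul, Matrix.det_mul, Matrix.det_diagonal, Matrix.det_diagonal,
        hsr, hsc, hprod, hprod]
      ring
    -- cofactor expansion of B2 along column q
    have hB2col : ∀ i, B2 i q = if i = r then 1 else 0 := by
      intro i
      rw [hB2app, hfq]
      by_cases hi : i = r
      · subst hi
        simp [hsr, hsc, hpivot1 i, hp]
      · rw [hpivot0 r i hi]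
        simp [hi]
    have hexp : B2.det = (-1)^((r:ℕ) + (q:ℕ)) * (B2.submatrix r.succAbove q.succAbove).det := by
      rw [Matrix.det_succ_column B2 q]
      rw [Finset.sum_eq_single r]
      · rw [hB2col, if_pos rfl, mul_one]
      · intro i _ hi
        rw [hB2col, if_neg hi, mul_zero, zero_mul]
      · intro h; exact absurd (Finset.mem_univ r) h
    -- the submatrix equals the minor of A'
    have hsub : B2.submatrix r.succAbove q.succAbove = A'.submatrix id g := by
      ext m j
      rw [Matrix.submatrix_apply, Matrix.submatrix_apply, hB2app, hcol, id_eq, hA']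
      have hqiff : q < q.succAbove j ↔ p < p.succAbove (g j) := by
        constructor
        · intro h
          have h2 := hfImono h
          rwa [hfq, hcol] at h2
        · intro h
          have h2 : fI q < fI (q.succAbove j) := by rw [hfq, hcol]; exact h
          exact hfImono.lt_iff_lt.1 h2
      have hrowne : r.succAbove m ≠ r := hsuccne k r m
      rcases hrowne.lt_or_gt with hrow' | hrow'
      · -- row above r
        have hsr1 : sr (r.succAbove m) = 1 := by
          rw [hsr]; simp [not_lt_of_gt hrow']
        by_cases hpc : p < p.succAbove (g j)
        · rw [hsr1, if_pos ⟨hrow', hpc⟩]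
          simp only [hsc]
          rw [if_pos (hqiff.2 hpc)]
          ring
        · rw [hsr1, if_neg (by tauto)]
          simp only [hsc]
          rw [if_neg (fun h => hpc (hqiff.1 h))]
          ring
      · -- row below r
        have hsr1 : sr (r.succAbove m) = -1 := by
          rw [hsr]; simp [hrow']
        have hcond : ¬ (r.succAbove m < r ∧ p < p.succAbove (g j)) := by
          intro h
          exact absurd h.1 (not_lt_of_gt hrow')
        by_cases hpc : p < p.succAbove (g j)
        · rw [hsr1, if_neg hcond]
          simp only [hsc]
          rw [if_pos (hqiff.2 hpc)]
          ring
        · -- entry of A is zero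
          have hcp : p.succAbove (g j) < p := by
            rcases lt_trichotomy (p.succAbove (g j)) p with h | h | h
            · exact h
            · exact absurd h (hsuccne n p (g j))
            · exact absurd h hpc
          have hz : A (r.succAbove m) (p.succAbove (g j)) = 0 := by
            apply hlt
            calc p.succAbove (g j) < p := hcp
              _ < piv (r.succAbove m) := hpiv hrow'
          rw [hz]
          simp
    -- combine
    have hrk : (r:ℕ) ≤ k := Fin.is_le r
    have hqk : (q:ℕ) ≤ k := Fin.is_le q
    have hsign : ((-1:ℝ))^((r:ℕ) + (q:ℕ)) * ((-1)^(k - (r:ℕ)) * (-1)^(k - (q:ℕ))) = 1 := by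
      rw [← pow_add, ← pow_add]
      have : (r:ℕ) + (q:ℕ) + (k - (r:ℕ) + (k - (q:ℕ))) = 2 * k := by omega
      rw [this, pow_mul]
      norm_num
    rw [hL, hR, ← hsub]
    have hthis := hexp
    rw [hdetB2] at hthis
    have h3 : ((-1:ℝ))^((r:ℕ) + (q:ℕ)) * ((-1:ℝ))^((r:ℕ) + (q:ℕ)) = 1 := by
      rw [← pow_add, ← two_mul, pow_mul]
      norm_num
    linear_combination (-((-1:ℝ)^((r:ℕ) + (q:ℕ)))) * hthis + B.det * hsign -
      (B2.submatrix r.succAbove q.succAbove).det * h3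
  refine ⟨key, ?_⟩
  rintro ⟨hrank, hTNN⟩
  constructor
  · -- rank of A' is k
    refine le_antisymm (Matrix.rank_le_height A') ?_
    have hne : ∀ m : Fin k, piv (r.succAbove m) ≠ piv r := by
      intro m h
      exact hsuccne k r m (hpiv.injective h)
    choose c hc using fun m => Fin.exists_succAbove_eq (hne m)
    set d : Fin k → ℝ :=
      fun m => if r.succAbove m < r ∧ piv r < piv (r.succAbove m) then -1 else 1 with hd
    set M : Matrix (Fin k) (Fin k) ℝ := A'.submatrix id c with hM
    have hMdiag : M = Matrix.diagonal d := by
      ext m m'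
      rw [hM, Matrix.submatrix_apply, id_eq, hA', hc]
      by_cases h : m = m'
      · subst h
        rw [hpivot1, Matrix.diagonal_apply_eq]
        simp only [hd, mul_one]
      · have : r.succAbove m ≠ r.succAbove m' := fun hh => h (Fin.succAbove_right_injective hh)
        rw [hpivot0 _ _ this, Matrix.diagonal_apply_ne _ h, mul_zero]
    have hdet : IsUnit M.det := by
      rw [hMdiag, Matrix.det_diagonal, isUnit_iff_ne_zero]
      apply Finset.prod_ne_zero_iff.2
      intro m _
      simp only [hd]
      split <;> norm_num
    have hMrank : M.rank = k := by
      rw [Matrix.rank_of_isUnit M ((Matrix.isUnit_iff_isUnit_det M).2 hdet)]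
      exact Fintype.card_fin k
    set P : Matrix (Fin n) (Fin k) ℝ := fun j m' => if j = c m' then 1 else 0 with hP
    have hMP : M = A' * P := by
      ext m m'
      rw [Matrix.mul_apply, hM, Matrix.submatrix_apply, id_eq]
      have hterm : ∀ j, A' m j * P j m' = if j = c m' then A' m j else 0 := by
        intro j
        simp only [hP]
        split <;> simp
      rw [Finset.sum_congr rfl fun j _ => hterm j,
        Finset.sum_ite_eq' Finset.univ (c m') (fun j => A' m j)]
      simp
    calc (k:ℕ) = M.rank := hMrank.symm
      _ = (A' * P).rank := by rw [hMP]
      _ ≤ A'.rank := Matrix.rank_mul_le_left A' P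
  · intro J hJ
    rw [key J hJ]
    apply hTNN
    have hpnotmem : piv r ∉ J.image (piv r).succAbove := by
      intro hmem
      obtain ⟨x, -, hx⟩ := Finset.mem_image.1 hmem
      exact hsuccne n (piv r) x hx
    rw [Finset.card_insert_of_notMem hpnotmem,
      Finset.card_image_of_injective _ Fin.succAbove_right_injective, hJ]
end

section
/- Let 1 ≤ k < n, κ_1 < … < κ_n real, c_1, …, c_n real, and let A be a totally nonnegative real k×n matrix of rank k in reduced row echelon form with pivot columns i_1 < … < i_k. Fix r such that row r of A equals the standard unit vector e_{i_r}. Let w_1(x), …, w_k(x) be the Darboux coefficients of (κ, A, c), and define g_m(x) = f_m'(x) − κ_{i_r} f_m(x) for m ∈ {1,…,k}∖{r}. Then: (i) the (k−1)×(k−1) Wronskian of the functions (g_m)_{m≠r} is nonzero for every x; (ii) the unique reals w'_1(x), …, w'_{k−1}(x) solving g_m^{(k−1)}(x) = Σ_{s=1}^{k−1} w'_s(x) g_m^{(k−1−s)}(x) for all m ≠ r satisfy, for all ζ, x ∈ ℝ, ζ^k − Σ_{s=1}^k w_s(x) ζ^{k−s} = (ζ − κ_{i_r}) · ( ζ^{k−1}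 − Σ_{s=1}^{k−1} w'_s(x) ζ^{k−1−s} ). In particular κ_{i_r} is a root of the Sato characteristic polynomial p(·, x) for every x. -/
open scoped BigOperators

open Finset Matrix Equiv

noncomputable def rowMinor {m n : ℕ} (B : Matrix (Fin n) (Fin m) ℝ)
    (I : Finset (Fin n)) : ℝ :=
  if h : I.card = m then
    (B.submatrix (fun i => ((I.orderIsoOfFin h) i : Fin n)) id).det
  else 0

private lemma orderEmbOfFin_congr {α : Type*} [LinearOrder α] {I J : Finset α} {m : ℕ}
    (hIJ : I = J) (h : I.card = m) (h' : J.card = m) (i : Fin m) :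
    I.orderEmbOfFin h i = J.orderEmbOfFin h' i := by subst hIJ; rfl

private lemma grouping {m n : ℕ} (A : Matrix (Fin m) (Fin n) ℝ)
    (B : Matrix (Fin n) (Fin m) ℝ) :
    ∑ φ ∈ Finset.univ.filter (fun φ : Fin m → Fin n => Function.Injective φ),
        (∏ i, B (φ i) i) * (A.submatrix id φ).det
      = ∑ I ∈ Finset.univ.filter (fun I : Finset (Fin n) => I.card = m),
          maxMinor A I * rowMinor B I := by
  classical
  set T := Finset.univ.filter (fun I : Finset (Fin n) => I.card = m) with hT
  have hcard : ∀ p : {I // I ∈ T}, (p.1).card = m := fun p => (Finset.mem_filter.mp p.2).2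
  set E : {I // I ∈ T} → Fin m → Fin n :=
    fun p i => (p.1.orderEmbOfFin (hcard p)) i with hE
  -- per-I expansion
  have perI : ∀ p : {I // I ∈ T}, maxMinor A p.1 * rowMinor B p.1
      = ∑ σ : Perm (Fin m),
          (∏ i, B (E p (σ i)) i) * (A.submatrix id (E p ∘ ⇑σ)).det := by
    intro p
    have hc := hcard p
    have hperm : ∀ σ : Perm (Fin m), (A.submatrix id (E p ∘ ⇑σ)).det
        = (Equiv.Perm.sign σ : ℝ) * (A.submatrix id (E p)).det := by
      intro σ
      have h1 : A.submatrix id (E p ∘ ⇑σ) = (A.submatrix id (E p)).submatrix id ⇑σ := rfl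
      rw [h1, Matrix.det_permute' σ]
    have hrm : rowMinor B p.1 = ∑ σ : Perm (Fin m),
        Equiv.Perm.sign σ • ∏ i, B (E p (σ i)) i := by
      rw [rowMinor, dif_pos hc, Matrix.det_apply]
      refine Finset.sum_congr rfl fun σ _ => ?_
      congr 1
    have hmm : maxMinor A p.1 = (A.submatrix id (E p)).det := by
      rw [maxMinor, dif_pos hc]; rfl
    rw [hmm, hrm, Finset.mul_sum]
    refine Finset.sum_congr rfl fun σ _ => ?_
    rw [hperm σ]
    rcases Int.units_eq_one_or (Equiv.Perm.sign σ) with h | h <;> simp [h] <;> ring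
  have hattach : ∑ I ∈ T, maxMinor A I * rowMinor B I
      = ∑ p ∈ T.attach, maxMinor A p.1 * rowMinor B p.1 := (Finset.sum_attach T _).symm
  rw [hattach]
  have hprod : ∑ p ∈ T.attach, maxMinor A p.1 * rowMinor B p.1
      = ∑ q ∈ T.attach ×ˢ (Finset.univ : Finset (Perm (Fin m))),
          (∏ i, B (E q.1 (q.2 i)) i) * (A.submatrix id (E q.1 ∘ ⇑q.2)).det := by
    rw [Finset.sum_product]
    exact Finset.sum_congr rfl fun p _ => perI p
  rw [hprod]
  -- the bijection q = (I, σ) ↦ E I ∘ σ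
  symm
  have keyJ : ∀ (φ : Fin m → Fin n) (hinj : Function.Injective φ),
      ∃ q : {I // I ∈ T} × Perm (Fin m), E q.1 ∘ ⇑q.2 = φ := by
    intro φ hinj
    have hIc : (Finset.univ.image φ).card = m := by
      rw [Finset.card_image_of_injective _ hinj, Finset.card_univ, Fintype.card_fin]
    have hIT : (Finset.univ.image φ) ∈ T := by simp [hT, hIc]
    have hmem : ∀ i, φ i ∈ Finset.univ.image φ := fun i =>
      Finset.mem_image_of_mem φ (Finset.mem_univ i)
    set p₀ : {I // I ∈ T} := ⟨Finset.univ.image φ, hIT⟩ with hp₀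
    set e := (p₀.1.orderIsoOfFin (hcard p₀)) with he
    have hψinj : Function.Injective (fun i => e.symm ⟨φ i, hmem i⟩) := by
      intro a b hab
      apply hinj
      have := congrArg e hab
      simp only [OrderIso.apply_symm_apply] at this
      exact congrArg Subtype.val this
    refine ⟨⟨p₀, Equiv.ofBijective _ ((Finite.injective_iff_bijective).mp hψinj)⟩, ?_⟩
    funext i
    simp only [Function.comp_apply, Equiv.ofBijective_apply, hE]
    rw [← Finset.coe_orderIsoOfFin_apply, ← he, OrderIso.apply_symm_apply]
  -- injectivity of the map q ↦ E q.1 ∘ q.2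
  have keyInj : ∀ q q' : {I // I ∈ T} × Perm (Fin m),
      E q.1 ∘ ⇑q.2 = E q'.1 ∘ ⇑q'.2 → q = q' := by
    intro ⟨p, σ⟩ ⟨p', σ'⟩ heq
    have himg : ∀ (p : {I // I ∈ T}) (σ : Perm (Fin m)),
        Finset.univ.image (E p ∘ ⇑σ) = p.1 := by
      intro p σ
      apply Finset.coe_injective
      rw [Finset.coe_image, Finset.coe_univ, Set.image_univ]
      have : Set.range (E p ∘ ⇑σ) = Set.range (E p) := by
        rw [Set.range_comp, σ.range_eq_univ, Set.image_univ]
      rw [this]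
      exact Finset.range_orderEmbOfFin _ _
    have hpp : p = p' := by
      apply Subtype.ext
      rw [← himg p σ, ← himg p' σ', heq]
    subst hpp
    have hσ : ∀ i, E p (σ i) = E p (σ' i) := fun i => congrFun heq i
    have : σ = σ' := by
      apply Equiv.ext
      intro i
      exact ((p.1.orderEmbOfFin (hcard p)).injective) (hσ i)
    rw [this]
  refine Finset.sum_bij' (i := fun q (_ : q ∈ T.attach ×ˢ Finset.univ) => E q.1 ∘ ⇑q.2)
    (j := fun φ hφ => (keyJ φ (by simpa using (Finset.mem_filter.mp hφ).2)).choose)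
    ?_ ?_ ?_ ?_ ?_
  · intro q _
    simp only [Finset.mem_filter, Finset.mem_univ, true_and]
    exact (((q.1.1.orderEmbOfFin (hcard q.1)).injective).comp q.2.injective)
  · intro φ hφ
    exact Finset.mem_product.mpr ⟨Finset.mem_attach _ _, Finset.mem_univ _⟩
  · intro q hq
    have hinj : Function.Injective (E q.1 ∘ ⇑q.2) :=
      ((q.1.1.orderEmbOfFin (hcard q.1)).injective).comp q.2.injective
    exact keyInj _ _ ((keyJ (E q.1 ∘ ⇑q.2) hinj).choose_spec)
  · intro φ hφ
    exact (keyJ φ (by simpa using (Finset.mem_filter.mp hφ).2)).choose_spec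
  · intro q _
    rfl

private lemma cauchyBinet {m n : ℕ} (A : Matrix (Fin m) (Fin n) ℝ)
    (B : Matrix (Fin n) (Fin m) ℝ) :
    (A * B).det = ∑ I : Finset (Fin n), maxMinor A I * rowMinor B I := by
  classical
  -- step 1
  have step1 : (A * B).det
      = ∑ φ : Fin m → Fin n, (∏ i, B (φ i) i) * (A.submatrix id φ).det := by
    calc (A * B).det
        = ∑ φ : Fin m → Fin n, ∑ σ : Perm (Fin m),
            Equiv.Perm.sign σ • ∏ i, A (σ i) (φ i) * B (φ i) i := by
          simp only [Matrix.det_apply, Matrix.mul_apply, Finset.prod_univ_sum,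
            Finset.smul_sum, Fintype.piFinset_univ]
          rw [Finset.sum_comm]
      _ = ∑ φ : Fin m → Fin n, (∏ i, B (φ i) i) * (A.submatrix id φ).det := by
          refine Finset.sum_congr rfl fun φ _ => ?_
          rw [Matrix.det_apply, Finset.mul_sum]
          refine Finset.sum_congr rfl fun σ _ => ?_
          rw [Finset.prod_mul_distrib]
          simp only [Matrix.submatrix_apply, id_eq]
          rcases Int.units_eq_one_or (Equiv.Perm.sign σ) with h | h <;>
            simp [h] <;> ring
  rw [step1]
  -- restrict to injective φ
  have step2 : ∑ φ : Fin m → Fin n, (∏ i, B (φ i) i) * (A.submatrix id φ).det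
      = ∑ φ ∈ Finset.univ.filter (fun φ : Fin m → Fin n => Function.Injective φ),
          (∏ i, B (φ i) i) * (A.submatrix id φ).det := by
    refine (Finset.sum_subset (Finset.filter_subset _ _) fun φ _ hφ => ?_).symm
    simp only [Finset.mem_filter, Finset.mem_univ, true_and] at hφ
    rw [Function.Injective] at hφ; push_neg at hφ
    obtain ⟨i, j, hij, hne⟩ := hφ
    have : (A.submatrix id φ).det = 0 :=
      Matrix.det_zero_of_column_eq hne fun k => by simp [hij]
    rw [this, mul_zero]
  rw [step2]
  -- RHS: restrict to card = m, attach
  have step3 : ∑ I : Finset (Fin n), maxMinor A I * rowMinor B I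
      = ∑ I ∈ Finset.univ.filter (fun I : Finset (Fin n) => I.card = m),
          maxMinor A I * rowMinor B I := by
    refine (Finset.sum_subset (Finset.filter_subset _ _) fun I _ hI => ?_).symm
    simp only [Finset.mem_filter, Finset.mem_univ, true_and] at hI
    rw [maxMinor, dif_neg hI, zero_mul]
  rw [step3]
  exact grouping A B

private lemma expsum_hasDerivAt {N : ℕ} (a b c : Fin N → ℝ) (x : ℝ) :
    HasDerivAt (fun x => ∑ j, a j * Real.exp (b j * x + c j))
      (∑ j, (a j * b j) * Real.exp (b j * x + c j)) x := by
  apply HasDerivAt.fun_sum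
  intro j _
  have h1 : HasDerivAt (fun x : ℝ => b j * x + c j) (b j) x := by
    simpa using ((hasDerivAt_id x).const_mul (b j)).add_const (c j)
  have h2 := (Real.hasDerivAt_exp (b j * x + c j)).comp x h1
  have h3 := h2.const_mul (a j)
  convert h3 using 1
  · rfl
  · rfl
  · ring

private lemma expsum_iteratedDeriv {N : ℕ} (a b c : Fin N → ℝ) (l : ℕ) :
    iteratedDeriv l (fun x => ∑ j, a j * Real.exp (b j * x + c j))
      = fun x => ∑ j, a j * b j ^ l * Real.exp (b j * x + c j) := by
  induction l generalizing a with
  | zero => funext x; simp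
  | succ l ih =>
    rw [iteratedDeriv_succ']
    have hd : (deriv fun x => ∑ j, a j * Real.exp (b j * x + c j))
        = fun x => ∑ j, (a j * b j) * Real.exp (b j * x + c j) := by
      funext x; exact (expsum_hasDerivAt a b c x).deriv
    rw [hd, ih (fun j => a j * b j)]
    funext x
    refine Finset.sum_congr rfl fun j _ => by ring

private lemma rowMinor_exp_pos {m n : ℕ} (κ c : Fin n → ℝ) (hκ : StrictMono κ) (x : ℝ)
    (I : Finset (Fin n)) (hI : I.card = m) :
    0 < rowMinor (Matrix.of fun (j : Fin n) (l : Fin m) =>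
      Real.exp (κ j * x + c j) * κ j ^ (l : ℕ)) I := by
  rw [rowMinor, dif_pos hI]
  have : ((Matrix.of fun (j : Fin n) (l : Fin m) =>
      Real.exp (κ j * x + c j) * κ j ^ (l : ℕ)).submatrix
        (fun i => ((I.orderIsoOfFin hI) i : Fin n)) id)
      = Matrix.of (fun i j : Fin m =>
          Real.exp (κ (I.orderEmbOfFin hI i) * x + c (I.orderEmbOfFin hI i)) *
            (Matrix.vandermonde (fun i => κ (I.orderEmbOfFin hI i))) i j) := by
    ext i j
    simp [Matrix.vandermonde]
  rw [this, Matrix.det_mul_column, Matrix.det_vandermonde]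
  apply mul_pos
  · exact Finset.prod_pos fun i _ => Real.exp_pos _
  · apply Finset.prod_pos
    intro i _
    apply Finset.prod_pos
    intro j hj
    have hij : i < j := Finset.mem_Ioi.mp hj
    have : κ (I.orderEmbOfFin hI i) < κ (I.orderEmbOfFin hI j) :=
      hκ ((I.orderEmbOfFin hI).strictMono hij)
    linarith

private lemma wronskian_pos {m n : ℕ} (κ c : Fin n → ℝ) (hκ : StrictMono κ)
    (A : Matrix (Fin m) (Fin n) ℝ)
    (hTNN : ∀ I : Finset (Fin n), I.card = m → 0 ≤ maxMinor A I)
    (I₀ : Finset (Fin n)) (hI₀c : I₀.card = m) (hI₀pos : 0 < maxMinor A I₀)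
    (f : Fin m → ℝ → ℝ)
    (hf : ∀ i, f i = fun x => ∑ j, A i j * Real.exp (κ j * x + c j)) (x : ℝ) :
    0 < (Matrix.of fun i l : Fin m => iteratedDeriv (l : ℕ) (f i) x).det := by
  have hmat : (Matrix.of fun i l : Fin m => iteratedDeriv (l : ℕ) (f i) x)
      = A * (Matrix.of fun (j : Fin n) (l : Fin m) =>
          Real.exp (κ j * x + c j) * κ j ^ (l : ℕ)) := by
    ext i l
    rw [Matrix.mul_apply]
    simp only [Matrix.of_apply, hf i, expsum_iteratedDeriv]
    refine Finset.sum_congr rfl fun j _ => by ring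
  rw [hmat, cauchyBinet]
  apply Finset.sum_pos'
  · intro I _
    by_cases h : I.card = m
    · exact mul_nonneg (hTNN I h) (rowMinor_exp_pos κ c hκ x I h).le
    · rw [maxMinor, dif_neg h, zero_mul]
  · exact ⟨I₀, Finset.mem_univ _,
      mul_pos hI₀pos (rowMinor_exp_pos κ c hκ x I₀ hI₀c)⟩

/-- for TNN soliton data in RREF (here with `k+1` rows) whose `r`-th row
is the standard unit vector at the pivot column `piv r`, the functions
`g_m = f_m' - κ_{piv r} f_m` (for rows `m ≠ r`, indexed via `r.succAbove`) have
nowhere vanishing `k × k` Wronskian, and the reduced Darboux coefficients `w'`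
solving `g_m^{(k)} = Σ_s w'_s g_m^{(k-s)}` give the factorization
`ζ^{k+1} - Σ_s w_s(x) ζ^{k+1-s} = (ζ - κ_{piv r})(ζ^k - Σ_s w'_s(x) ζ^{k-s})`;
in particular `κ_{piv r}` is a root of the Sato characteristic polynomial. -/
theorem rref_unit_row_reduced_darboux
    (k n : ℕ) (hkn : k + 1 < n)
    (κ c : Fin n → ℝ) (hκ : StrictMono κ)
    (A : Matrix (Fin (k + 1)) (Fin n) ℝ) (hrank : A.rank = k + 1)
    (hTNN : ∀ I : Finset (Fin n), I.card = k + 1 → 0 ≤ maxMinor A I)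
    (piv : Fin (k + 1) → Fin n) (hpiv : StrictMono piv)
    (hpivot1 : ∀ m, A m (piv m) = 1)
    (hpivot0 : ∀ m m', m' ≠ m → A m' (piv m) = 0)
    (hlt : ∀ m j, j < piv m → A m j = 0)
    (f : Fin (k + 1) → ℝ → ℝ)
    (hf : ∀ i x, f i x = ∑ j, A i j * Real.exp (κ j * x + c j))
    (w : Fin (k + 1) → ℝ → ℝ)
    (hw : ∀ x i, iteratedDeriv (k + 1) (f i) x =
      ∑ s : Fin (k + 1), w s x * iteratedDeriv (k - (s : ℕ)) (f i) x)
    (r : Fin (k + 1))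
    (hrow : ∀ j, j ≠ piv r → A r j = 0)
    (g : Fin k → ℝ → ℝ)
    (hg : ∀ m x, g m x = deriv (f (r.succAbove m)) x - κ (piv r) * f (r.succAbove m) x) :
    (∀ x : ℝ,
      Matrix.det (Matrix.of fun m l : Fin k => iteratedDeriv (l : ℕ) (g m) x) ≠ 0) ∧
    (∀ w' : Fin k → ℝ → ℝ,
      (∀ x m, iteratedDeriv k (g m) x =
        ∑ s : Fin k, w' s x * iteratedDeriv (k - 1 - (s : ℕ)) (g m) x) →
      ∀ ζ x : ℝ,
        ζ ^ (k + 1) - ∑ s : Fin (k + 1), w s x * ζ ^ (k - (s : ℕ)) =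
          (ζ - κ (piv r)) *
            (ζ ^ k - ∑ s : Fin k, w' s x * ζ ^ (k - 1 - (s : ℕ)))) ∧
    (∀ x : ℝ,
      κ (piv r) ^ (k + 1) -
        ∑ s : Fin (k + 1), w s x * κ (piv r) ^ (k - (s : ℕ)) = 0) := by
  set μ := κ (piv r) with hμ
  have hfe : ∀ i, f i = fun x => ∑ j, A i j * Real.exp (κ j * x + c j) :=
    fun i => funext fun x => hf i x
  -- derivative formula
  have hD : ∀ i (l : ℕ) (x : ℝ), iteratedDeriv l (f i) x
      = ∑ j, A i j * κ j ^ l * Real.exp (κ j * x + c j) := by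
    intro i l x
    rw [hfe i, expsum_iteratedDeriv]
  -- row r is a pure exponential
  have hfr : ∀ (l : ℕ) (x : ℝ), iteratedDeriv l (f r) x
      = μ ^ l * Real.exp (μ * x + c (piv r)) := by
    intro l x
    rw [hD r l x]
    rw [Finset.sum_eq_single (piv r)]
    · rw [hpivot1 r]; ring
    · intro j _ hj
      rw [hrow j hj]; ring
    · intro h; exact absurd (Finset.mem_univ _) h
  -- g as an exponential sum
  have hgsum : ∀ m, g m = fun x => ∑ j,
      (A (r.succAbove m) j * (κ j - μ)) * Real.exp (κ j * x + c j) := by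
    intro m
    funext x
    rw [hg m x]
    have hder : deriv (f (r.succAbove m)) x
        = ∑ j, (A (r.succAbove m) j * κ j) * Real.exp (κ j * x + c j) := by
      rw [hfe (r.succAbove m)]
      exact (expsum_hasDerivAt _ _ _ x).deriv
    rw [hder, hf (r.succAbove m) x, Finset.mul_sum, ← Finset.sum_sub_distrib]
    refine Finset.sum_congr rfl fun j _ => by ring
  -- derivatives of g in terms of derivatives of f
  have hDg : ∀ m (l : ℕ) (x : ℝ), iteratedDeriv l (g m) x
      = iteratedDeriv (l+1) (f (r.succAbove m)) x
        - μ * iteratedDeriv l (f (r.succAbove m)) x := by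
    intro m l x
    rw [hgsum m, expsum_iteratedDeriv, hD _ (l+1) x, hD _ l x, Finset.mul_sum,
      ← Finset.sum_sub_distrib]
    refine Finset.sum_congr rfl fun j _ => by ring
  -- the pivot minor equals 1
  have hI₀ : ∃ I₀ : Finset (Fin n), I₀.card = k + 1 ∧ maxMinor A I₀ = 1 := by
    refine ⟨Finset.univ.image piv, ?_, ?_⟩
    · rw [Finset.card_image_of_injective _ hpiv.injective, Finset.card_univ,
        Fintype.card_fin]
    · have hc : (Finset.univ.image piv).card = k + 1 := by
        rw [Finset.card_image_of_injective _ hpiv.injective, Finset.card_univ,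
          Fintype.card_fin]
      rw [maxMinor, dif_pos hc]
      have hemb : piv = (Finset.univ.image piv).orderEmbOfFin hc :=
        Finset.orderEmbOfFin_unique hc
          (fun i => Finset.mem_image_of_mem piv (Finset.mem_univ i)) hpiv
      have h1 : (A.submatrix id fun j =>
          (((Finset.univ.image piv).orderIsoOfFin hc) j : Fin n))
          = (1 : Matrix (Fin (k+1)) (Fin (k+1)) ℝ) := by
        ext i j
        simp only [Matrix.submatrix_apply, id_eq, Finset.coe_orderIsoOfFin_apply, ← hemb]
        by_cases h : i = j
        · subst h; rw [hpivot1 i, Matrix.one_apply_eq]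
        · rw [hpivot0 j i h, Matrix.one_apply_ne h]
      rw [h1, Matrix.det_one]
  obtain ⟨I₀, hI₀c, hI₀v⟩ := hI₀
  -- Wronskian of f is positive
  have hWf : ∀ x : ℝ, 0 <
      (Matrix.of fun i l : Fin (k+1) => iteratedDeriv (l : ℕ) (f i) x).det :=
    fun x => wronskian_pos κ c hκ A hTNN I₀ hI₀c (by rw [hI₀v]; norm_num) f hfe x
  -- column operations: Wronskian of f = ± exp ⬝ Wronskian of g
  have hWfg : ∀ x : ℝ,
      (Matrix.of fun i l : Fin (k+1) => iteratedDeriv (l : ℕ) (f i) x).det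
      = (-1 : ℝ) ^ (r : ℕ) * Real.exp (μ * x + c (piv r)) *
        (Matrix.of fun m l : Fin k => iteratedDeriv (l : ℕ) (g m) x).det := by
    intro x
    set Mf := Matrix.of fun i l : Fin (k+1) => iteratedDeriv (l : ℕ) (f i) x with hMf
    set V : Matrix (Fin (k+1)) (Fin (k+1)) ℝ := Matrix.of (fun a b =>
      (if a = b then 1 else 0) + (if (a:ℕ)+1 = (b:ℕ) then -μ else 0)) with hV
    have hdetV : V.det = 1 := by
      have htri : V.BlockTriangular id := by
        intro i j hij
        simp only [hV, Matrix.of_apply, id_eq] at *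
        rw [if_neg (by omega : ¬ i = j), if_neg (by omega : ¬ (i:ℕ)+1 = (j:ℕ))]
        ring
      rw [Matrix.det_of_upperTriangular htri]
      have hne : ∀ i : Fin (k+1), V i i = 1 := by
        intro i
        have h2 : ((i:ℕ)+1 : ℕ) ≠ (i:ℕ) := by omega
        simp [hV, h2]
      simp [hne]
    have hMV : ∀ (i : Fin (k+1)) (b : Fin (k+1)), (Mf * V) i b
        = iteratedDeriv (b:ℕ) (f i) x
          - (if _ : 0 < (b:ℕ) then μ * iteratedDeriv ((b:ℕ)-1) (f i) x else 0) := by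
      intro i b
      rw [Matrix.mul_apply, sub_eq_add_neg]
      simp only [hV, Matrix.of_apply, mul_add]
      rw [Finset.sum_add_distrib]
      congr 1
      · simp [mul_ite, Finset.sum_ite_eq', hMf]
      · by_cases hb : 0 < (b:ℕ)
        · rw [dif_pos hb]
          rw [Finset.sum_eq_single (⟨(b:ℕ)-1, by omega⟩ : Fin (k+1))]
          · rw [if_pos (by simp; omega)]
            simp only [hMf, Matrix.of_apply]
            ring
          · intro a _ ha
            rw [if_neg (by
              intro hcon
              apply ha
              apply Fin.ext
              simp at hcon ⊢
              omega), mul_zero]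
          · intro h; exact absurd (Finset.mem_univ _) h
        · rw [dif_neg hb]
          rw [Finset.sum_eq_zero]
          · ring
          · intro a _
            rw [if_neg (by omega), mul_zero]
    have hdet1 : Mf.det = (Mf * V).det := by rw [Matrix.det_mul, hdetV, mul_one]
    rw [hdet1, Matrix.det_succ_row (Mf * V) r]
    rw [Finset.sum_eq_single (0 : Fin (k+1))]
    · have h0 : (Mf * V) r 0 = Real.exp (μ * x + c (piv r)) := by
        rw [hMV r 0]
        simp [hfr 0 x]
      have hsub : (Mf * V).submatrix r.succAbove (0 : Fin (k+1)).succAbove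
          = Matrix.of fun m l : Fin k => iteratedDeriv (l : ℕ) (g m) x := by
        ext m l
        have hzsa : (0 : Fin (k+1)).succAbove l = l.succ := by
          rw [Fin.succAbove_zero]
        rw [Matrix.submatrix_apply, hzsa, hMV]
        rw [dif_pos (by simp)]
        simp only [Fin.val_succ, Nat.add_sub_cancel, Matrix.of_apply]
        rw [hDg m l x]
      rw [h0, hsub]
      simp
    · intro b _ hb
      have hbpos : 0 < (b : ℕ) := by
        rcases Nat.eq_zero_or_pos (b : ℕ) with h | h
        · exact absurd (Fin.ext h) hb
        · exact h
      have hz : (Mf * V) r b = 0 := by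
        rw [hMV r b, dif_pos hbpos, hfr _ x, hfr _ x]
        have : μ ^ (b:ℕ) = μ * μ ^ ((b:ℕ)-1) := by
          rw [← pow_succ']
          congr 1
          omega
        rw [this]
        ring
      rw [hz]
      ring
    · intro h; exact absurd (Finset.mem_univ _) h
  -- part (i)
  have hWg : ∀ x : ℝ,
      (Matrix.of fun m l : Fin k => iteratedDeriv (l : ℕ) (g m) x).det ≠ 0 := by
    intro x hcon
    have h1 := hWf x
    rw [hWfg x, hcon, mul_zero] at h1
    exact lt_irrefl 0 h1
  -- part (iii)
  have hroot : ∀ x : ℝ, μ^(k+1) - ∑ s : Fin (k+1), w s x * μ^(k - (s:ℕ)) = 0 := by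
    intro x
    have h1 := hw x r
    rw [hfr (k+1) x] at h1
    have h2 : ∑ s : Fin (k+1), w s x * iteratedDeriv (k - (s:ℕ)) (f r) x
        = (∑ s : Fin (k+1), w s x * μ^(k-(s:ℕ))) * Real.exp (μ * x + c (piv r)) := by
      rw [Finset.sum_mul]
      refine Finset.sum_congr rfl fun s _ => ?_
      rw [hfr (k - (s:ℕ)) x]; ring
    rw [h2] at h1
    have h3 : μ^(k+1) = ∑ s : Fin (k+1), w s x * μ^(k-(s:ℕ)) :=
      mul_right_cancel₀ (Real.exp_ne_zero _) h1
    linarith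
  refine ⟨hWg, ?_, hroot⟩
  -- part (ii)
  intro w' hw' ζ x
  -- the reduced coefficient vector, over ℕ to avoid dependent indices
  set W1 : ℕ → ℝ := fun t => if h : t < k then w' ⟨t, h⟩ x else 0 with hW1
  set W2 : ℕ → ℝ := fun t => if h : 0 < t ∧ t ≤ k then w' ⟨t-1, by omega⟩ x else 0 with hW2
  set B : ℕ → ℝ := fun t => (if t = 0 then μ else 0) + W1 t - μ * W2 t with hB
  have hBsum : ∀ u : ℕ → ℝ, ∑ t : Fin (k+1), B (t:ℕ) * u (k - (t:ℕ))
      = μ * u k + ∑ s : Fin k, w' s x * (u (k-(s:ℕ)) - μ * u (k-1-(s:ℕ))) := by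
    intro u
    have hsplit : ∑ t : Fin (k+1), B (t:ℕ) * u (k - (t:ℕ))
        = (∑ t : Fin (k+1), (if (t:ℕ) = 0 then μ else 0) * u (k-(t:ℕ)))
          + (∑ t : Fin (k+1), W1 (t:ℕ) * u (k-(t:ℕ)))
          - (∑ t : Fin (k+1), μ * W2 (t:ℕ) * u (k-(t:ℕ))) := by
      rw [← Finset.sum_add_distrib, ← Finset.sum_sub_distrib]
      refine Finset.sum_congr rfl fun t _ => by rw [hB]; ring
    have hT1 : (∑ t : Fin (k+1), (if (t:ℕ) = 0 then μ else 0) * u (k-(t:ℕ)))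
        = μ * u k := by
      rw [Fin.sum_univ_succ]
      simp
    have hT2 : (∑ t : Fin (k+1), W1 (t:ℕ) * u (k-(t:ℕ)))
        = ∑ s : Fin k, w' s x * u (k-(s:ℕ)) := by
      rw [Fin.sum_univ_castSucc]
      have hlast : W1 ((Fin.last k : Fin (k+1)):ℕ) = 0 := by
        rw [hW1]
        simp
      rw [hlast, zero_mul, add_zero]
      refine Finset.sum_congr rfl fun s _ => ?_
      have hs := s.isLt
      rw [hW1]
      simp only [Fin.coe_castSucc]
      rw [dif_pos hs]
    have hT3 : (∑ t : Fin (k+1), μ * W2 (t:ℕ) * u (k-(t:ℕ)))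
        = ∑ s : Fin k, μ * w' s x * u (k-1-(s:ℕ)) := by
      rw [Fin.sum_univ_succ]
      have h0 : W2 ((0 : Fin (k+1)):ℕ) = 0 := by
        rw [hW2]
        simp
      rw [h0]
      rw [mul_zero, zero_mul, zero_add]
      refine Finset.sum_congr rfl fun s _ => ?_
      have hs := s.isLt
      have hcond : 0 < ((s.succ : Fin (k+1)):ℕ) ∧ ((s.succ : Fin (k+1)):ℕ) ≤ k := by
        simp only [Fin.val_succ]
        omega
      rw [hW2]
      simp only [Fin.val_succ]
      rw [dif_pos (by omega : 0 < (s:ℕ)+1 ∧ (s:ℕ)+1 ≤ k)]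
      have h2 : (k - ((s:ℕ)+1) : ℕ) = k-1-(s:ℕ) := by omega
      simp only [Nat.add_sub_cancel, Fin.eta, h2]
    rw [hsplit, hT1, hT2, hT3, add_sub_assoc, ← Finset.sum_sub_distrib]
    congr 1
    refine Finset.sum_congr rfl fun s _ => by ring
  -- the factorization identity, algebraically, for the coefficients B
  have hzeta : ∀ ζ' : ℝ, ζ'^(k+1) - ∑ t : Fin (k+1), B (t:ℕ) * ζ'^(k-(t:ℕ))
      = (ζ' - μ) * (ζ'^k - ∑ s : Fin k, w' s x * ζ'^(k-1-(s:ℕ))) := by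
    intro ζ'
    rw [hBsum (fun j => ζ'^j)]
    have hterm : ∀ s : Fin k, (ζ' - μ) * (w' s x * ζ'^(k-1-(s:ℕ)))
        = w' s x * (ζ'^(k-(s:ℕ)) - μ * ζ'^(k-1-(s:ℕ))) := by
      intro s
      have hs := s.isLt
      have hp : ζ'^(k-(s:ℕ)) = ζ' * ζ'^(k-1-(s:ℕ)) := by
        rw [← pow_succ']
        congr 1
        omega
      rw [hp]
      ring
    rw [mul_sub (ζ' - μ), Finset.mul_sum]
    rw [Finset.sum_congr rfl fun s _ => hterm s]
    have hpk : ζ'^(k+1) = ζ' * ζ'^k := by rw [← pow_succ']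
    rw [hpk]
    ring
  -- the matrix of derivatives in reversed column order
  set M' : Matrix (Fin (k+1)) (Fin (k+1)) ℝ :=
    Matrix.of (fun i t => iteratedDeriv (k-(t:ℕ)) (f i) x) with hM'
  have hM'det : M'.det ≠ 0 := by
    have hsub : M' = (Matrix.of fun i l : Fin (k+1) =>
        iteratedDeriv (l : ℕ) (f i) x).submatrix id ⇑(Fin.revPerm (n := k+1)) := by
      ext i t
      simp only [hM', Matrix.submatrix_apply, Matrix.of_apply, id_eq]
      congr 1
      rw [Fin.revPerm_apply, Fin.val_rev]
      omega
    rw [hsub, Matrix.det_permute']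
    intro hcon
    rcases mul_eq_zero.mp hcon with h | h
    · rcases Int.units_eq_one_or (Equiv.Perm.sign (Fin.revPerm (n := k+1))) with hs | hs <;>
        rw [hs] at h <;> norm_num at h
    · exact absurd h (ne_of_gt (hWf x))
  have hinj : Function.Injective M'.mulVec := by
    rw [Matrix.mulVec_injective_iff_isUnit, Matrix.isUnit_iff_isUnit_det]
    exact isUnit_iff_ne_zero.mpr hM'det
  -- both coefficient vectors solve the same linear system
  have hMa : ∀ i, ∑ t : Fin (k+1), M' i t * w t x = iteratedDeriv (k+1) (f i) x := by
    intro i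
    rw [hw x i]
    refine Finset.sum_congr rfl fun t _ => ?_
    simp only [hM', Matrix.of_apply]
    ring
  have hMB : ∀ i, ∑ t : Fin (k+1), M' i t * B (t:ℕ)
      = iteratedDeriv (k+1) (f i) x := by
    intro i
    have hcomm : ∑ t : Fin (k+1), M' i t * B (t:ℕ)
        = ∑ t : Fin (k+1), B (t:ℕ) * iteratedDeriv (k-(t:ℕ)) (f i) x := by
      refine Finset.sum_congr rfl fun t _ => ?_
      simp only [hM', Matrix.of_apply]
      ring
    rw [hcomm, hBsum (fun j => iteratedDeriv j (f i) x)]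
    rcases eq_or_ne i r with hi | hi
    · have hz : ∀ s : Fin k, w' s x * (iteratedDeriv (k-(s:ℕ)) (f i) x
          - μ * iteratedDeriv (k-1-(s:ℕ)) (f i) x) = 0 := by
        intro s
        have hs := s.isLt
        rw [hi, hfr (k-(s:ℕ)) x, hfr (k-1-(s:ℕ)) x]
        have hp : μ^(k-(s:ℕ)) = μ * μ^(k-1-(s:ℕ)) := by
          rw [← pow_succ']
          congr 1
          omega
        rw [hp]
        ring
      rw [Finset.sum_eq_zero fun s _ => hz s, add_zero, hi, hfr (k+1) x, hfr k x,
        pow_succ']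
      ring
    · obtain ⟨m, hm⟩ := Fin.exists_succAbove_eq hi
      have hterm : ∀ s : Fin k, w' s x * (iteratedDeriv (k-(s:ℕ)) (f i) x
          - μ * iteratedDeriv (k-1-(s:ℕ)) (f i) x)
          = w' s x * iteratedDeriv (k-1-(s:ℕ)) (g m) x := by
        intro s
        have hs := s.isLt
        have hks : k - 1 - (s:ℕ) + 1 = k - (s:ℕ) := by omega
        rw [hDg m (k-1-(s:ℕ)) x, hks, hm]
      rw [Finset.sum_congr rfl fun s _ => hterm s, ← hw' x m, hDg m k x, hm]
      ring
  -- conclude the coefficients agree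
  have hab : (fun t : Fin (k+1) => w t x) = (fun t : Fin (k+1) => B (t:ℕ)) := by
    apply hinj
    funext i
    simp only [Matrix.mulVec, dotProduct]
    rw [hMa i, hMB i]
  have hsum_eq : ∑ s : Fin (k+1), w s x * ζ^(k-(s:ℕ))
      = ∑ t : Fin (k+1), B (t:ℕ) * ζ^(k-(t:ℕ)) := by
    refine Finset.sum_congr rfl fun t _ => ?_
    rw [congrFun hab t]
  rw [hsum_eq, hzeta ζ]
end
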